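/- Let G(T) be a connected threshold graph on {1,…,n} (n ≥ 2) with construction sequence T and Laplacian matrix L. Then the number of distinct nonzero eigenvalues of L equals the number of distinct vertex degrees of G(T): |{λ ∈ ℝ : λ ≠ 0 and det(λ·I − L) = 0}| = |{d(1),…,d(n)}|. -/

import Mathlib

open Finset Matrix Polynomial

def thresholdGraph (n : ℕ) (T : Fin n → Bool) : SimpleGraph (Fin n) where
  Adj i j := i ≠ j ∧ T (max i j) = true
  symm := by
    constructor
    intro i j h
    exact ⟨h.1.symm, by rw [max_comm]; exact h.2⟩
  loopless := by
    constructor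
    intro i h
    exact h.1 rfl

instance thresholdGraph.instDecidableRelAdj (n : ℕ) (T : Fin n → Bool) :
    DecidableRel (thresholdGraph n T).Adj :=
  fun i j => decidable_of_iff (i ≠ j ∧ T (max i j) = true) Iff.rfl

namespace ThresholdAux

variable (n : ℕ) (T : Fin n → Bool)

/-- number of joins strictly after `k` -/
def tc (k : Fin n) : ℕ := (univ.filter (fun j : Fin n => k < j ∧ T j = true)).card

def dd (i : Fin n) : ℕ := (if T i = true then (i : ℕ) else 0) + tc n T i

def rr (i : Fin n) : ℕ := (if T i = true then (i : ℕ) + 1 else 0) + tc n T i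

variable {n T}

lemma rr_eq (i : Fin n) : rr n T i = dd n T i + (if T i = true then 1 else 0) := by
  unfold rr dd; by_cases h : T i = true <;> simp [h] <;> ring

lemma adj_iff {i j : Fin n} : (thresholdGraph n T).Adj i j ↔
    (j < i ∧ T i = true) ∨ (i < j ∧ T j = true) := by
  show i ≠ j ∧ T (max i j) = true ↔ _
  constructor
  · rintro ⟨hne, hT⟩
    rcases lt_or_gt_of_ne hne with h | h
    · right; exact ⟨h, by rwa [max_eq_right h.le] at hT⟩
    · left; exact ⟨h, by rwa [max_eq_left h.le] at hT⟩
  · rintro (⟨h, ht⟩ | ⟨h, ht⟩)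
    · exact ⟨h.ne', by rwa [max_eq_left h.le]⟩
    · exact ⟨h.ne, by rwa [max_eq_right h.le]⟩

lemma adj_of_lt {a b : Fin n} (h : a < b) :
    (thresholdGraph n T).Adj a b ↔ T b = true := by
  rw [adj_iff]; simp [h, asymm h]

lemma adj_of_lt' {a b : Fin n} (h : a < b) :
    (thresholdGraph n T).Adj b a ↔ T b = true := by
  rw [adj_iff]; simp [h, asymm h]

lemma card_filter_lt (i : Fin n) : (univ.filter (fun j : Fin n => j < i)).card = (i : ℕ) := by
  rw [show (univ.filter (fun j : Fin n => j < i)) = Finset.Iio i by ext j; simp]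
  exact Fin.card_Iio i

lemma degree_eq (i : Fin n) : (thresholdGraph n T).degree i = dd n T i := by
  classical
  rw [← SimpleGraph.card_neighborFinset_eq_degree, SimpleGraph.neighborFinset_eq_filter]
  have : univ.filter ((thresholdGraph n T).Adj i) =
      univ.filter (fun j => j < i ∧ T i = true) ∪ univ.filter (fun j => i < j ∧ T j = true) := by
    rw [← filter_or]
    exact filter_congr (fun j _ => by rw [adj_iff])
  have hdisj : Disjoint (univ.filter (fun j : Fin n => j < i ∧ T i = true))
      (univ.filter (fun j : Fin n => i < j ∧ T j = true)) := by
    rw [disjoint_left]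
    rintro a ha hb
    simp only [mem_filter] at ha hb
    exact absurd hb.2.1 (asymm ha.2.1)
  rw [this, card_union_of_disjoint hdisj, dd]
  congr 1
  by_cases h : T i = true <;> simp [h, card_filter_lt]


section Matrices

variable (n : ℕ) (T : Fin n → Bool)

/-- Helmert-type matrix of eigenvectors: column 0 is all-ones, column `k ≥ 1` is
`(1,…,1,-k,0,…,0)`. -/
def P : Matrix (Fin n) (Fin n) ℝ :=
  fun j k => if j < k ∨ (k : ℕ) = 0 then 1 else if j = k then -((k : ℕ) : ℝ) else 0

/-- eigenvalues -/
def mu (k : Fin n) : ℝ := if (k : ℕ) = 0 then 0 else ((rr n T k : ℕ) : ℝ)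

variable {n T}

lemma col_zero {k : Fin n} (hk : (k : ℕ) = 0) (j : Fin n) : P n j k = 1 := by
  simp [P, hk]

lemma col_eq {k : Fin n} (hk : (k : ℕ) ≠ 0) (m : Fin n) :
    P n m k = (if m < k then 1 else 0) + (if m = k then -((k : ℕ) : ℝ) else 0) := by
  unfold P
  by_cases h1 : m < k
  · simp [h1, h1.ne]
  · by_cases h2 : m = k
    · simp [h1, h2, hk]
    · simp [h1, h2, hk]

lemma lap_apply (j m : Fin n) : (thresholdGraph n T).lapMatrix ℝ j m =
    (if j = m then ((thresholdGraph n T).degree j : ℝ) else 0) -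
      (if (thresholdGraph n T).Adj j m then 1 else 0) := by
  simp [SimpleGraph.lapMatrix, SimpleGraph.degMatrix, Matrix.diagonal_apply, Matrix.sub_apply]

lemma lap_rowsum (j : Fin n) : ∑ m, (thresholdGraph n T).lapMatrix ℝ j m = 0 := by
  have := congrFun ((thresholdGraph n T).lapMatrix_mulVec_const_eq_zero (R := ℝ)) j
  simpa [Matrix.mulVec, dotProduct] using this

lemma card_notlt_and_T (k : Fin n) :
    ((univ.filter (fun m : Fin n => ¬ m < k)).filter (fun m => T m = true)).card
      = (if T k = true then 1 else 0) + tc n T k := by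
  rw [filter_filter]
  have : univ.filter (fun m : Fin n => ¬ m < k ∧ T m = true) =
      univ.filter (fun m : Fin n => m = k ∧ T k = true) ∪
        univ.filter (fun m : Fin n => k < m ∧ T m = true) := by
    rw [← filter_or]
    refine filter_congr (fun m _ => ?_)
    constructor
    · rintro ⟨h1, h2⟩
      rcases eq_or_lt_of_le (not_lt.mp h1) with h | h
      · exact Or.inl ⟨h.symm, h ▸ h2⟩
      · exact Or.inr ⟨h, h2⟩
    · rintro (⟨h1, h2⟩ | ⟨h1, h2⟩)
      · exact ⟨by simp [h1], h1 ▸ h2⟩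
      · exact ⟨not_lt.mpr h1.le, h2⟩
  rw [this, card_union_of_disjoint]
  · congr 1
    by_cases h : T k = true
    · simp [h, filter_eq']
    · simp [h]
  · rw [disjoint_left]
    rintro a ha hb
    simp only [mem_filter] at ha hb
    exact absurd (ha.2.1 ▸ hb.2.1) (lt_irrefl k)

lemma lap_mulVec_col (k : Fin n) :
    (thresholdGraph n T).lapMatrix ℝ *ᵥ (fun m => P n m k) =
      mu n T k • (fun m => P n m k) := by
  classical
  by_cases hk : (k : ℕ) = 0
  · have hcol : (fun m => P n m k) = (fun _ => (1 : ℝ)) := funext (col_zero hk)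
    rw [hcol, (thresholdGraph n T).lapMatrix_mulVec_const_eq_zero]
    funext j
    simp [mu, hk]
  · funext j
    set L := (thresholdGraph n T).lapMatrix ℝ with hL
    have hmv : (L *ᵥ (fun m => P n m k)) j = ∑ m, L j m * P n m k := by
      simp [Matrix.mulVec, dotProduct]
    rw [hmv]
    have hsplit : ∑ m, L j m * P n m k
        = (∑ m ∈ univ.filter (fun m : Fin n => m < k), L j m) + L j k * (-((k:ℕ):ℝ)) := by
      have : ∀ m, L j m * P n m k
          = (if m < k then L j m else 0) + (if m = k then L j m * (-((k:ℕ):ℝ)) else 0) := by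
        intro m
        rw [col_eq hk]
        by_cases h1 : m < k
        · simp [h1, h1.ne]
        · by_cases h2 : m = k <;> simp [h1, h2]
      rw [Finset.sum_congr rfl (fun m _ => this m), Finset.sum_add_distrib]
      congr 1
      · rw [Finset.sum_filter]
      · rw [Finset.sum_ite_eq' univ k]
        simp
    rw [hsplit]
    have hrowsplit : (∑ m ∈ univ.filter (fun m : Fin n => m < k), L j m)
        = - ∑ m ∈ univ.filter (fun m : Fin n => ¬ m < k), L j m := by
      have := Finset.sum_filter_add_sum_filter_not univ (fun m : Fin n => m < k) (fun m => L j m)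
      rw [lap_rowsum j] at this
      linarith
    rcases lt_trichotomy j k with hjk | hjk | hjk
    -- case j < k
    · have hPjk : P n j k = 1 := by simp [P, hjk]
      have hterm : ∀ m ∈ univ.filter (fun m : Fin n => ¬ m < k),
          L j m = -(if T m = true then (1:ℝ) else 0) := by
        intro m hm
        simp only [mem_filter] at hm
        have hjm : j < m := lt_of_lt_of_le hjk (not_lt.mp hm.2)
        simp [hL, lap_apply, hjm.ne, adj_of_lt hjm]
      have hS2 : (∑ m ∈ univ.filter (fun m : Fin n => ¬ m < k), L j m)
          = -(((if T k = true then 1 else 0) + tc n T k : ℕ) : ℝ) := by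
        rw [Finset.sum_congr rfl hterm, Finset.sum_neg_distrib, ← card_notlt_and_T k,
          Finset.sum_boole]
      have hLjk : L j k = -(if T k = true then (1:ℝ) else 0) := by
        simp [hL, lap_apply, hjk.ne, adj_of_lt hjk]
      rw [hrowsplit, hS2, hLjk, Pi.smul_apply, hPjk, mu, if_neg hk, rr]
      by_cases h : T k = true <;>
        simp only [h, if_true, if_false, Bool.false_eq_true, smul_eq_mul] <;> push_cast <;> ring
    -- case j = k
    · subst hjk
      have hPjk : P n j j = -((j:ℕ):ℝ) := by
        unfold P
        simp [hk, lt_irrefl]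
      have hterm : ∀ m ∈ univ.filter (fun m : Fin n => m < j),
          L j m = -(if T j = true then (1:ℝ) else 0) := by
        intro m hm
        simp only [mem_filter] at hm
        simp [hL, lap_apply, (ne_of_gt hm.2), adj_of_lt' hm.2]
      have hS1 : (∑ m ∈ univ.filter (fun m : Fin n => m < j), L j m)
          = ((j:ℕ):ℝ) * (-(if T j = true then (1:ℝ) else 0)) := by
        rw [Finset.sum_congr rfl hterm, Finset.sum_const, card_filter_lt]
        simp [mul_comm]
      have hLjj : L j j = ((dd n T j : ℕ) : ℝ) := by
        rw [hL, lap_apply, if_pos rfl, degree_eq]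
        simp [(thresholdGraph n T).loopless.irrefl j]
      rw [hrowsplit] at hsplit
      rw [hS1, hLjj, Pi.smul_apply, hPjk, mu, if_neg hk, rr_eq]
      by_cases h : T j = true <;>
        simp only [h, if_true, if_false, Bool.false_eq_true, smul_eq_mul] <;> push_cast <;> ring
    -- case k < j
    · have hPjk : P n j k = 0 := by
        unfold P
        simp [hk, not_lt.mpr hjk.le, asymm hjk, hjk.ne']
      have hterm : ∀ m ∈ univ.filter (fun m : Fin n => m < k),
          L j m = -(if T j = true then (1:ℝ) else 0) := by
        intro m hm
        simp only [mem_filter] at hm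
        have hmj : m < j := hm.2.trans hjk
        simp [hL, lap_apply, (ne_of_gt hmj), adj_of_lt' hmj]
      have hS1 : (∑ m ∈ univ.filter (fun m : Fin n => m < k), L j m)
          = ((k:ℕ):ℝ) * (-(if T j = true then (1:ℝ) else 0)) := by
        rw [Finset.sum_congr rfl hterm, Finset.sum_const, card_filter_lt]
        simp [mul_comm]
      have hLjk : L j k = -(if T j = true then (1:ℝ) else 0) := by
        simp [hL, lap_apply, hjk.ne', adj_of_lt' hjk]
      rw [hS1, hLjk, Pi.smul_apply, hPjk]
      simp


/-- squared norms of the columns of `P` -/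
def cc (n : ℕ) (k : Fin n) : ℝ := if (k : ℕ) = 0 then (n : ℝ) else ((k:ℕ):ℝ) + ((k:ℕ):ℝ)^2

noncomputable def Q (n : ℕ) : Matrix (Fin n) (Fin n) ℝ := fun k j => P n j k * (cc n k)⁻¹

lemma cc_ne_zero {k : Fin n} (hn : 0 < n) : cc n k ≠ 0 := by
  unfold cc
  by_cases h : (k : ℕ) = 0
  · simp [h]
    omega
  · rw [if_neg h]
    have h1 : (0:ℝ) < ((k:ℕ):ℝ) := by
      have : 0 < (k:ℕ) := Nat.pos_of_ne_zero h
      exact_mod_cast this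
    positivity

lemma colsum {k : Fin n} (hk : (k : ℕ) ≠ 0) : ∑ j, P n j k = 0 := by
  rw [Finset.sum_congr rfl (fun j _ => col_eq hk j), Finset.sum_add_distrib]
  rw [← Finset.sum_filter, Finset.sum_const, card_filter_lt, Finset.sum_ite_eq' univ k]
  simp

lemma colsq (k : Fin n) : ∑ j, P n j k * P n j k = cc n k := by
  by_cases hk : (k : ℕ) = 0
  · rw [Finset.sum_congr rfl (fun j _ => by rw [col_zero hk j])]
    simp [cc, hk]
  · have hpt : ∀ j, P n j k * P n j k
        = (if j < k then 1 else 0) + (if j = k then ((k:ℕ):ℝ)^2 else 0) := by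
      intro j
      rw [col_eq hk]
      by_cases h1 : j < k
      · simp [h1, h1.ne]
      · by_cases h2 : j = k <;> simp [h1, h2] <;> ring
    rw [Finset.sum_congr rfl (fun j _ => hpt j), Finset.sum_add_distrib,
      ← Finset.sum_filter, Finset.sum_const, card_filter_lt, Finset.sum_ite_eq' univ k]
    simp [cc, hk]

lemma colorth {k k' : Fin n} (h : k < k') : ∑ j, P n j k * P n j k' = 0 := by
  have hk' : (k' : ℕ) ≠ 0 := by
    have := h
    rw [Fin.lt_def] at this
    omega
  by_cases hk : (k : ℕ) = 0
  · rw [Finset.sum_congr rfl (fun j _ => by rw [col_zero hk j, one_mul])]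
    exact colsum hk'
  · have hpt : ∀ j, P n j k * P n j k' = P n j k := by
      intro j
      rcases lt_trichotomy j k with h1 | h1 | h1
      · have : P n j k' = 1 := by simp [P, h1.trans h]
        rw [this, mul_one]
      · subst h1
        have : P n j k' = 1 := by simp [P, h]
        rw [this, mul_one]
      · have : P n j k = 0 := by
          unfold P
          simp [hk, not_lt.mpr h1.le, asymm h1, h1.ne']
        rw [this, zero_mul]
    rw [Finset.sum_congr rfl (fun j _ => hpt j)]
    exact colsum hk

lemma QP (hn : 0 < n) : Q n * P n = 1 := by
  ext k k'
  rw [Matrix.mul_apply]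
  have : ∀ j, Q n k j * P n j k' = (cc n k)⁻¹ * (P n j k * P n j k') := by
    intro j; unfold Q; ring
  rw [Finset.sum_congr rfl (fun j _ => this j), ← Finset.mul_sum]
  rcases lt_trichotomy k k' with h | h | h
  · rw [colorth h, mul_zero, Matrix.one_apply_ne h.ne]
  · subst h
    rw [colsq, inv_mul_cancel₀ (cc_ne_zero hn), Matrix.one_apply_eq]
  · rw [Finset.sum_congr rfl (fun j _ => mul_comm (P n j k) (P n j k')), colorth h,
      mul_zero, Matrix.one_apply_ne h.ne']

lemma detP_ne_zero (hn : 0 < n) : (P n).det ≠ 0 :=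
  Matrix.det_ne_zero_of_left_inverse (QP hn)

lemma MP_eq_PD (lam : ℝ) :
    (lam • (1 : Matrix (Fin n) (Fin n) ℝ) - (thresholdGraph n T).lapMatrix ℝ) * P n
      = P n * Matrix.diagonal (fun k => lam - mu n T k) := by
  ext j k
  rw [Matrix.mul_diagonal, Matrix.mul_apply]
  have hcol := congrFun (lap_mulVec_col (T := T) k) j
  simp only [Matrix.mulVec, dotProduct, Pi.smul_apply, smul_eq_mul] at hcol
  have : ∀ m, (lam • (1 : Matrix (Fin n) (Fin n) ℝ) - (thresholdGraph n T).lapMatrix ℝ) j m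
        * P n m k
      = (if j = m then lam * P n m k else 0) - (thresholdGraph n T).lapMatrix ℝ j m * P n m k := by
    intro m
    simp only [Matrix.sub_apply, Matrix.smul_apply, Matrix.one_apply, smul_eq_mul]
    by_cases h : j = m <;> simp [h] <;> ring
  rw [Finset.sum_congr rfl (fun m _ => this m), Finset.sum_sub_distrib,
    Finset.sum_ite_eq univ j, hcol]
  rw [if_pos (Finset.mem_univ j)]
  ring

lemma det_eq (hn : 0 < n) (lam : ℝ) :
    (lam • (1 : Matrix (Fin n) (Fin n) ℝ) - (thresholdGraph n T).lapMatrix ℝ).det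
      = ∏ k, (lam - mu n T k) := by
  have h := congrArg Matrix.det (MP_eq_PD (T := T) lam)
  rw [Matrix.det_mul, Matrix.det_mul, Matrix.det_diagonal] at h
  have hP := detP_ne_zero (n := n) hn
  rw [mul_comm ((P n).det)] at h
  exact mul_right_cancel₀ hP h

end Matrices

section Combinatorics

variable {n : ℕ} {T : Fin n → Bool}

lemma tc_le_of_le {i j : Fin n} (h : i ≤ j) : tc n T j ≤ tc n T i := by
  apply Finset.card_le_card
  intro m hm
  simp only [mem_filter] at hm ⊢
  exact ⟨mem_univ m, lt_of_le_of_lt h hm.2.1, hm.2.2⟩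

lemma card_filter_Ioc (i j : Fin n) :
    (univ.filter (fun m : Fin n => i < m ∧ m ≤ j)).card = (j : ℕ) - (i : ℕ) := by
  rw [show (univ.filter (fun m : Fin n => i < m ∧ m ≤ j)) = Finset.Ioc i j by ext m; simp]
  rw [← Nat.card_Ioc]
  rw [← Fin.map_valEmbedding_Ioc, card_map]

lemma tc_le_add {i j : Fin n} (h : i ≤ j) : tc n T i ≤ ((j:ℕ) - (i:ℕ)) + tc n T j := by
  have hsub : (univ.filter (fun m : Fin n => i < m ∧ T m = true)) ⊆
      (univ.filter (fun m : Fin n => i < m ∧ m ≤ j)) ∪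
        (univ.filter (fun m : Fin n => j < m ∧ T m = true)) := by
    intro m hm
    simp only [mem_filter, mem_union] at hm ⊢
    rcases le_or_gt m j with h1 | h1
    · exact Or.inl ⟨mem_univ m, hm.2.1, h1⟩
    · exact Or.inr ⟨mem_univ m, h1, hm.2.2⟩
  calc tc n T i ≤ _ := Finset.card_le_card hsub
    _ ≤ _ := Finset.card_union_le _ _
    _ = _ := by rw [card_filter_Ioc]; rfl

lemma dd_sep (hT0 : ∀ i : Fin n, (i:ℕ) = 0 → T i = false)
    {i j : Fin n} (hi0 : (i:ℕ) ≠ 0) (hTi : T i = false) (hTj : T j = true) :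
    dd n T i < dd n T j := by
  have hj0 : (j:ℕ) ≠ 0 := fun h => by rw [hT0 j h] at hTj; exact Bool.false_ne_true hTj
  have hddi : dd n T i = tc n T i := by simp [dd, hTi]
  have hddj : dd n T j = (j:ℕ) + tc n T j := by simp [dd, hTj]
  rw [hddi, hddj]
  rcases le_or_gt i j with h | h
  · have := tc_le_add (T := T) h
    have hij : (i:ℕ) ≤ (j:ℕ) := h
    omega
  · have := tc_le_of_le (T := T) h.le
    omega

lemma tc_zero_split (z one : Fin n) (hz : (z:ℕ) = 0) (hone : (one:ℕ) = 1) :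
    tc n T z = (if T one = true then 1 else 0) + tc n T one := by
  have : univ.filter (fun m : Fin n => z < m ∧ T m = true) =
      univ.filter (fun m : Fin n => m = one ∧ T one = true) ∪
        univ.filter (fun m : Fin n => one < m ∧ T m = true) := by
    rw [← filter_or]
    refine filter_congr (fun m _ => ?_)
    rw [Fin.lt_def, Fin.lt_def, hz, hone]
    constructor
    · rintro ⟨h1, h2⟩
      rcases Nat.lt_or_ge 1 (m : ℕ) with h3 | h3
      · exact Or.inr ⟨h3, h2⟩
      · have hm : m = one := Fin.ext (by omega)
        exact Or.inl ⟨hm, hm ▸ h2⟩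
    · rintro (⟨h1, h2⟩ | ⟨h1, h2⟩)
      · subst h1
        rw [hone]
        exact ⟨by omega, h2⟩
      · exact ⟨by omega, h2⟩
  rw [tc, this, card_union_of_disjoint]
  · congr 1
    by_cases h : T one = true
    · simp [h, filter_eq']
    · simp [h]
  · rw [disjoint_left]
    rintro a ha hb
    simp only [mem_filter] at ha hb
    rw [ha.2.1] at hb
    exact absurd hb.2.1 (lt_irrefl _)

lemma dd_zero_eq_dd_one (z one : Fin n) (hz : (z:ℕ) = 0) (hone : (one:ℕ) = 1)
    (hT0 : T z = false) :
    dd n T z = dd n T one := by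
  rw [dd, dd, if_neg (by simp [hT0]), tc_zero_split z one hz hone, hone]
  by_cases h : T one = true <;> simp [h]

lemma card_rr_eq_card_dd (hn : 2 ≤ n) (z : Fin n) (hz : (z : ℕ) = 0) (hT0 : T z = false) :
    ((univ.erase z).image (rr n T)).card = (univ.image (dd n T)).card := by
  have hT0' : ∀ i : Fin n, (i:ℕ) = 0 → T i = false := by
    intro i hi
    have : i = z := Fin.ext (by rw [hi, hz])
    rw [this]; exact hT0
  set one : Fin n := ⟨1, by omega⟩ with honedef
  have hone : (one : ℕ) = 1 := rfl
  set Ftr := univ.filter (fun i : Fin n => T i = true) with hFtr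
  set Ffa := univ.filter (fun i : Fin n => T i = false ∧ i ≠ z) with hFfa
  have h_erase : univ.erase z = Ftr ∪ Ffa := by
    ext i
    simp only [mem_erase, mem_union, hFtr, hFfa, mem_filter, mem_univ, true_and]
    constructor
    · rintro ⟨h1, -⟩
      rcases Bool.eq_false_or_eq_true (T i) with h | h
      · exact Or.inl h
      · exact Or.inr ⟨h, h1⟩
    · rintro (h | ⟨-, h⟩)
      · refine ⟨fun he => ?_, trivial⟩
        rw [he, hT0] at h
        exact Bool.false_ne_true h
      · exact ⟨h, trivial⟩
  have hsepa : ∀ a ∈ Ffa.image (dd n T), ∀ b ∈ Ftr.image (dd n T), a < b := by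
    intro a ha b hb
    simp only [mem_image, hFtr, hFfa, mem_filter, mem_univ, true_and] at ha hb
    obtain ⟨i, ⟨hTi, hi⟩, rfl⟩ := ha
    obtain ⟨j, hTj, rfl⟩ := hb
    refine dd_sep hT0' (fun h => hi (Fin.ext (by rw [h, hz]))) hTi hTj
  have himg_tr : Ftr.image (rr n T) = (Ftr.image (dd n T)).image (· + 1) := by
    rw [Finset.image_image]
    refine Finset.image_congr (fun i hi => ?_)
    simp only [hFtr, mem_coe, mem_filter] at hi
    rw [rr_eq, if_pos hi.2]
    rfl
  have himg_fa : Ffa.image (rr n T) = Ffa.image (dd n T) := by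
    refine Finset.image_congr (fun i hi => ?_)
    simp only [hFfa, mem_coe, mem_filter] at hi
    rw [rr_eq, if_neg (by simp [hi.2.1]), add_zero]
  have hLHS : ((univ.erase z).image (rr n T)).card
      = (Ftr.image (dd n T)).card + (Ffa.image (dd n T)).card := by
    rw [h_erase, Finset.image_union, himg_tr, himg_fa, card_union_of_disjoint,
      Finset.card_image_of_injective _ (add_left_injective 1)]
    rw [disjoint_left]
    intro a ha hb
    obtain ⟨b', hb', rfl⟩ := Finset.mem_image.mp ha
    have := hsepa _ hb _ hb'
    omega
  have hone_mem : one ∈ univ.erase z := by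
    simp only [mem_erase, mem_univ, and_true]
    intro h
    have := congrArg Fin.val h
    rw [hone, hz] at this
    omega
  have hRHS : (univ.image (dd n T)).card = ((univ.erase z).image (dd n T)).card := by
    conv_lhs => rw [← Finset.insert_erase (mem_univ z)]
    rw [Finset.image_insert]
    rw [Finset.insert_eq_self.mpr]
    rw [Finset.mem_image]
    exact ⟨one, hone_mem, (dd_zero_eq_dd_one z one hz hone hT0).symm⟩
  rw [hLHS, hRHS, h_erase, Finset.image_union, card_union_of_disjoint]
  rw [disjoint_left]
  intro a ha hb
  exact absurd (hsepa a hb a ha) (lt_irrefl a)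

end Combinatorics

section Connectivity

variable {n : ℕ} {T : Fin n → Bool}

lemma T_last (hn : 2 ≤ n) (hconn : (thresholdGraph n T).Connected)
    (last z : Fin n) (hlast : (last:ℕ) = n - 1) (hz : (z:ℕ) = 0) : T last = true := by
  by_contra h
  have hne : last ≠ z := fun he => by rw [he, hz] at hlast; omega
  obtain ⟨w⟩ := hconn.preconnected last z
  obtain ⟨v, hadj⟩ : ∃ v, (thresholdGraph n T).Adj last v := by
    cases w with
    | nil => exact absurd rfl hne
    | cons hadj p => exact ⟨_, hadj⟩
  rw [adj_iff] at hadj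
  rcases hadj with ⟨-, h2⟩ | ⟨h1, -⟩
  · exact h h2
  · have := v.isLt
    rw [Fin.lt_def, hlast] at h1
    omega

lemma rr_pos (hn : 2 ≤ n) (last : Fin n) (hlast : (last:ℕ) = n - 1)
    (hTlast : T last = true) {k : Fin n} (hk : (k : ℕ) ≠ 0) : 0 < rr n T k := by
  by_cases h : T k = true
  · rw [rr, if_pos h]; omega
  · rw [rr, if_neg h]
    simp only [zero_add]
    rw [tc]
    apply Finset.card_pos.mpr
    refine ⟨last, ?_⟩
    simp only [mem_filter, mem_univ, true_and]
    refine ⟨?_, hTlast⟩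
    rw [Fin.lt_def, hlast]
    have hlt := k.isLt
    have hne : (k : ℕ) ≠ n - 1 := by
      intro he
      apply h
      have : k = last := Fin.ext (by rw [he, hlast])
      rw [this]; exact hTlast
    omega

end Connectivity

end ThresholdAux

open ThresholdAux

theorem thresholdGraph_card_nonzero_eigenvalues (n : ℕ) (T : Fin n → Bool) (hn : 2 ≤ n)
    (hT1 : T ⟨0, lt_of_lt_of_le two_pos hn⟩ = false)
    (hconn : (thresholdGraph n T).Connected) :
    {lam : ℝ | lam ≠ 0 ∧
        (lam • (1 : Matrix (Fin n) (Fin n) ℝ) - (thresholdGraph n T).lapMatrix ℝ).det = 0}.ncard =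
      (Finset.univ.image (fun i => (thresholdGraph n T).degree i)).card := by
  classical
  set z : Fin n := ⟨0, by omega⟩ with hzdef
  set lst : Fin n := ⟨n - 1, by omega⟩ with hlstdef
  have hT0 : T z = false := hT1
  have hTlast : T lst = true := T_last hn hconn lst z rfl rfl
  have hset : {lam : ℝ | lam ≠ 0 ∧
        (lam • (1 : Matrix (Fin n) (Fin n) ℝ) - (thresholdGraph n T).lapMatrix ℝ).det = 0}
      = ↑((univ.erase z).image (fun k => ((rr n T k : ℕ) : ℝ))) := by
    ext lam
    simp only [Set.mem_setOf_eq, coe_image, Set.mem_image, mem_coe, mem_erase, mem_univ, and_true]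
    constructor
    · rintro ⟨hne, hdet⟩
      rw [det_eq (by omega)] at hdet
      obtain ⟨k, -, hk⟩ := Finset.prod_eq_zero_iff.mp hdet
      have hkv : (k : ℕ) ≠ 0 := by
        intro h
        rw [mu, if_pos h, sub_zero] at hk
        exact hne hk
      refine ⟨k, fun h => hkv (by rw [h]), ?_⟩
      rw [mu, if_neg hkv] at hk
      linarith [sub_eq_zero.mp hk]
    · rintro ⟨k, hk0, rfl⟩
      have hkv : (k : ℕ) ≠ 0 := fun h => hk0 (Fin.ext (by rw [h]))
      refine ⟨?_, ?_⟩
      · have hpos := rr_pos hn lst rfl hTlast hkv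
        exact Nat.cast_ne_zero.mpr (by omega)
      · rw [det_eq (by omega)]
        refine Finset.prod_eq_zero (mem_univ k) ?_
        rw [mu, if_neg hkv, sub_self]
  rw [hset, Set.ncard_coe_finset]
  have hcast : (univ.erase z).image (fun k => ((rr n T k : ℕ) : ℝ))
      = ((univ.erase z).image (rr n T)).image (fun m : ℕ => (m : ℝ)) := by
    rw [Finset.image_image]
    rfl
  rw [hcast, Finset.card_image_of_injective _ Nat.cast_injective]
  have hdeg : (Finset.univ.image (fun i => (thresholdGraph n T).degree i))
      = univ.image (dd n T) := by
    refine Finset.image_congr (fun i _ => degree_eq i)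
  rw [hdeg]
  exact card_rr_eq_card_dd hn z rfl hT0
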